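/- For every natural number k and real x with -1 ≤ x < 1, the identity U_k(x) = ((-1)^k · √2 / (2·√(1-x))) · U_{2k+1}(√((1-x)/2)) holds. -/

import Mathlib

open Polynomial Polynomial.Chebyshev

lemma U_add_two_sub (n : ℤ) : U ℝ (n + 2) = (4 * X ^ 2 - 2) * U ℝ n - U ℝ (n - 2) := by
  have h2 := U_eq ℝ (n + 2)
  have h1 := U_eq ℝ (n + 1)
  have h0 := U_eq ℝ n
  simp only [add_sub_cancel_right, show n + 2 - 2 = n by ring, show n + 1 - 1 = n by ring,
    show n + 2 - 1 = n + 1 by ring, show n + 1 - 2 = n - 1 by ring] at h2 h1 h0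
  linear_combination h2 + (2 * X : ℝ[X]) * h1 + h0

theorem stmt_5 (k : ℕ) (x : ℝ) (h1 : -1 ≤ x) (h2 : x < 1) :
    (U ℝ (k : ℤ)).eval x =
      ((-1 : ℝ) ^ k * Real.sqrt 2 / (2 * Real.sqrt (1 - x))) *
        (U ℝ (2 * (k : ℤ) + 1)).eval (Real.sqrt ((1 - x) / 2)) := by
  have hx : (0:ℝ) < 1 - x := by linarith
  set y := Real.sqrt ((1 - x) / 2) with hy
  have hy2 : y ^ 2 = (1 - x) / 2 := Real.sq_sqrt (by linarith)
  have hs : Real.sqrt 2 * y = Real.sqrt (1 - x) := by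
    rw [hy, ← Real.sqrt_mul (by norm_num : (0:ℝ) ≤ 2)]
    congr 1; ring
  have hspos : (0:ℝ) < Real.sqrt (1 - x) := Real.sqrt_pos.2 hx
  induction k using Nat.twoStepInduction with
  | zero =>
    simp only [Nat.cast_zero, pow_zero, one_mul, mul_zero, zero_add, U_zero, U_one, eval_one,
      eval_mul, eval_ofNat, eval_X]
    field_simp
    linear_combination (-1) * hs
  | one =>
    have h3 : (2 * (1:ℤ) + 1) = 3 := by norm_num
    have hU3eq : U ℝ (3:ℤ) = 2 * X * U ℝ 2 - U ℝ 1 := by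
      have := U_add_two ℝ 1
      norm_num at this
      rw [U_one]; exact this
    have hU3 : (U ℝ (3:ℤ)).eval y = 8 * y ^ 3 - 4 * y := by
      rw [hU3eq, U_two, U_one]
      simp
      ring
    rw [Nat.cast_one, h3, hU3]
    have h4 : 8 * y ^ 3 - 4 * y = -(4 * x * y) := by linear_combination (8 * y) * hy2
    rw [h4]
    have h5 : (U ℝ (1:ℤ)).eval x = 2 * x := by rw [U_one]; simp
    rw [h5]
    field_simp
    linear_combination (-4 * x) * hs
  | more k ih0 ih1 =>
    have hcast : ((k + 2 : ℕ) : ℤ) = (k : ℤ) + 2 := by push_cast; ring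
    have hcast1 : ((k + 1 : ℕ) : ℤ) = (k : ℤ) + 1 := by push_cast; ring
    rw [hcast, U_add_two]
    have hbig : (2 * ((k:ℤ) + 2) + 1) = (2 * (k:ℤ) + 3) + 2 := by ring
    have hrec := U_add_two_sub (2 * (k:ℤ) + 3)
    rw [hbig, hrec]
    have e1 : (2 * (k:ℤ) + 3 - 2) = 2 * (k:ℤ) + 1 := by ring
    have e2 : (2 * (k:ℤ) + 3) = 2 * ((k:ℤ) + 1) + 1 := by ring
    rw [e1, e2]
    have ha := ih0
    have hb := ih1
    rw [hcast1] at hb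
    simp only [eval_sub, eval_mul, eval_ofNat, eval_X, eval_pow] at *
    rw [ha, hb]
    have hy2' : (4 * y ^ 2 - 2) = -2 * x := by rw [hy2]; ring
    have hm1 : ((-1:ℝ)) ^ (k + 2) = (-1:ℝ) ^ k := by ring
    have hm2 : ((-1:ℝ)) ^ (k + 1) = -(-1:ℝ) ^ k := by ring
    rw [hm1, hm2, hy2']
    field_simp
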